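/- The linear map T : M_2(ℝ) → M_2(ℝ) sending the matrix with entries (a, b; c, d) to the matrix with entries (a, a−c; c, a+c) preserves Green's L-relation and Green's H-relation, but is not of the form A ↦ PAX for any invertible P and matrix X. -/

import Mathlib

/-- The row space of a square matrix: the span of its rows. -/
def rowSpace {K : Type*} [Field K] {n : ℕ} (A : Matrix (Fin n) (Fin n) K) :
    Submodule K (Fin n → K) :=
  Submodule.span K (Set.range A)

/-- The column space of a square matrix: the span of its columns. -/
def colSpace {K : Type*} [Field K] {n : ℕ} (A : Matrix (Fin n) (Fin n) K) :
    Submodule K (Fin n → K) :=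
  Submodule.span K (Set.range A.transpose)

lemma rowSpace_eq_top {n : ℕ} {A : Matrix (Fin n) (Fin n) ℝ} (h : IsUnit A.det) :
    rowSpace A = ⊤ := by
  rw [rowSpace, show Set.range A = Set.range A.row from rfl, ← range_vecMulLinear, LinearMap.range_eq_top]
  intro v
  exact ⟨A⁻¹.vecMulLinear v, by
    simp [Matrix.vecMulLinear_apply, Matrix.vecMul_vecMul, Matrix.nonsing_inv_mul _ h]⟩

lemma colSpace_eq_top {n : ℕ} {A : Matrix (Fin n) (Fin n) ℝ} (h : IsUnit A.det) :
    colSpace A = ⊤ := by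
  have : colSpace A = rowSpace A.transpose := rfl
  rw [this, rowSpace_eq_top]
  rwa [Matrix.det_transpose]

lemma rowSpace_zero {n : ℕ} : rowSpace (0 : Matrix (Fin n) (Fin n) ℝ) = ⊥ := by
  have : Set.range (0 : Matrix (Fin n) (Fin n) ℝ) ⊆ {0} := by
    rintro _ ⟨i, rfl⟩; rfl
  rw [rowSpace]
  refine le_antisymm ?_ bot_le
  refine (Submodule.span_le).2 ?_
  rintro _ ⟨i, rfl⟩
  simp [Matrix.zero_apply]
  rfl

lemma colSpace_zero {n : ℕ} : colSpace (0 : Matrix (Fin n) (Fin n) ℝ) = ⊥ := by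
  have : colSpace (0 : Matrix (Fin n) (Fin n) ℝ) = rowSpace (0 : Matrix (Fin n) (Fin n) ℝ).transpose := rfl
  rw [this, Matrix.transpose_zero, rowSpace_zero]

lemma transfer {A B : Matrix (Fin 2) (Fin 2) ℝ} (h : rowSpace A = rowSpace B)
    (h1 : A 0 0 = 0) (h2 : A 1 0 = 0) : B 0 0 = 0 ∧ B 1 0 = 0 := by
  have hS : rowSpace A ≤ LinearMap.ker (LinearMap.proj (R := ℝ) (φ := fun _ : Fin 2 => ℝ) 0) := by
    rw [rowSpace, Submodule.span_le]
    rintro _ ⟨i, rfl⟩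
    fin_cases i <;> simp [LinearMap.mem_ker, h1, h2]
  have hB : ∀ i, B i ∈ rowSpace B := fun i => Submodule.subset_span ⟨i, rfl⟩
  constructor
  · have := hS (h ▸ hB 0); simpa using this
  · have := hS (h ▸ hB 1); simpa using this

theorem concrete_L_H_preserver_not_standard
    (T : Matrix (Fin 2) (Fin 2) ℝ →ₗ[ℝ] Matrix (Fin 2) (Fin 2) ℝ)
    (hT : ∀ A : Matrix (Fin 2) (Fin 2) ℝ,
      T A = !![A 0 0, A 0 0 - A 1 0; A 1 0, A 0 0 + A 1 0]) :
    (∀ A B : Matrix (Fin 2) (Fin 2) ℝ,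
        rowSpace A = rowSpace B → rowSpace (T A) = rowSpace (T B)) ∧
    (∀ A B : Matrix (Fin 2) (Fin 2) ℝ,
        rowSpace A = rowSpace B ∧ colSpace A = colSpace B →
          rowSpace (T A) = rowSpace (T B) ∧ colSpace (T A) = colSpace (T B)) ∧
    ¬ ∃ (P X : Matrix (Fin 2) (Fin 2) ℝ), IsUnit P ∧
        ∀ A : Matrix (Fin 2) (Fin 2) ℝ, T A = P * A * X := by
  have hdet : ∀ A : Matrix (Fin 2) (Fin 2) ℝ, (T A).det = (A 0 0)^2 + (A 1 0)^2 := by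
    intro A; rw [hT]; simp [Matrix.det_fin_two]; ring
  have hzero : ∀ A : Matrix (Fin 2) (Fin 2) ℝ, A 0 0 = 0 → A 1 0 = 0 → T A = 0 := by
    intro A h1 h2
    rw [hT, h1, h2]
    norm_num
    ext i j
    fin_cases i <;> fin_cases j <;> simp
  have key : ∀ A B : Matrix (Fin 2) (Fin 2) ℝ, rowSpace A = rowSpace B →
      rowSpace (T A) = rowSpace (T B) ∧ colSpace (T A) = colSpace (T B) := by
    intro A B h
    by_cases hA : A 0 0 = 0 ∧ A 1 0 = 0
    · obtain ⟨hB1, hB2⟩ := transfer h hA.1 hA.2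
      rw [hzero A hA.1 hA.2, hzero B hB1 hB2]
      exact ⟨rfl, rfl⟩
    · have hB : ¬ (B 0 0 = 0 ∧ B 1 0 = 0) := by
        intro hb
        exact hA (transfer h.symm hb.1 hb.2)
      have hunit : ∀ C : Matrix (Fin 2) (Fin 2) ℝ, ¬ (C 0 0 = 0 ∧ C 1 0 = 0) →
          IsUnit (T C).det := by
        intro C hC
        rw [hdet, isUnit_iff_ne_zero]
        intro hc
        have h1 : (C 0 0)^2 = 0 := by nlinarith [sq_nonneg (C 1 0)]
        have h2 : (C 1 0)^2 = 0 := by nlinarith [sq_nonneg (C 0 0)]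
        exact hC ⟨pow_eq_zero_iff two_ne_zero |>.1 h1, pow_eq_zero_iff two_ne_zero |>.1 h2⟩
      rw [rowSpace_eq_top (hunit A hA), rowSpace_eq_top (hunit B hB),
        colSpace_eq_top (hunit A hA), colSpace_eq_top (hunit B hB)]
      exact ⟨rfl, rfl⟩
  refine ⟨fun A B h => (key A B h).1, fun A B h => key A B h.1, ?_⟩
  rintro ⟨P, X, hP, hPX⟩
  have h1 : (T !![0,0;1,0]).det = 1 := by
    rw [hdet]; norm_num
  rw [hPX] at h1
  rw [Matrix.det_mul, Matrix.det_mul] at h1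
  have h2 : (!![0,0;1,0] : Matrix (Fin 2) (Fin 2) ℝ).det = 0 := by
    simp [Matrix.det_fin_two]
  rw [h2] at h1
  simp at h1
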